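/- Let ψ be a rational function associated with a projection P_ã mapping C1 onto C2. Then the set 𝒢_ψ of parameter values t0 such that the pair (x1(t0), x2(ψ(t0))) is unlucky is finite. -/

import Mathlib

noncomputable section

open Polynomial Filter Matrix

/-- Evaluation of a real rational function at a real point (junk value at poles). -/
def RFeval (f : RatFunc ℝ) (t : ℝ) : ℝ := f.num.eval t / f.denom.eval t

/-- Evaluation of a real rational function at a complex point (junk value at poles). -/
def RFevalC (f : RatFunc ℝ) (t : ℂ) : ℂ :=
  ((f.num.map (algebraMap ℝ ℂ)).eval t) / ((f.denom.map (algebraMap ℝ ℂ)).eval t)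

/-- The derivative of a rational function. -/
def RFderiv (f : RatFunc ℝ) : RatFunc ℝ :=
  (algebraMap (Polynomial ℝ) (RatFunc ℝ) (derivative f.num) *
      algebraMap (Polynomial ℝ) (RatFunc ℝ) f.denom -
    algebraMap (Polynomial ℝ) (RatFunc ℝ) f.num *
      algebraMap (Polynomial ℝ) (RatFunc ℝ) (derivative f.denom)) /
  algebraMap (Polynomial ℝ) (RatFunc ℝ) (f.denom ^ 2)

/-- The real domain of definition of a rational space parametrization. -/
def DomR (x : Fin 3 → RatFunc ℝ) (t : ℝ) : Prop := ∀ i, (x i).denom.eval t ≠ 0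

/-- The complex domain of definition of a rational space parametrization. -/
def DomC (x : Fin 3 → RatFunc ℝ) (t : ℂ) : Prop :=
  ∀ i, ((x i).denom.map (algebraMap ℝ ℂ)).eval t ≠ 0

/-- The affine point of the curve corresponding to the (real) parameter value `t`. -/
def evalAff (x : Fin 3 → RatFunc ℝ) (t : ℝ) : Fin 3 → ℝ := fun i => RFeval (x i) t

/-- The affine point of the curve corresponding to the (complex) parameter value `t`. -/
def evalAffC (x : Fin 3 → RatFunc ℝ) (t : ℂ) : Fin 3 → ℂ := fun i => RFevalC (x i) t

/-- Properness of a parametrization: it is injective for all but finitely many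
(complex) parameter values. -/
def ProperParam (x : Fin 3 → RatFunc ℝ) : Prop :=
  {t : ℂ | DomC x t ∧ ∃ t', t' ≠ t ∧ DomC x t' ∧ evalAffC x t' = evalAffC x t}.Finite

/-- The curve is a straight line. -/
def IsLineParam (x : Fin 3 → RatFunc ℝ) : Prop :=
  ∃ p v : Fin 3 → ℝ, v ≠ 0 ∧ ∀ t : ℝ, DomR x t → ∃ μ : ℝ, evalAff x t = p + μ • v

/-- The curve lies in the plane with coefficient vector `n = (A,B,C,D)`,
of equation `Ax + By + Cz + D = 0`. -/
def InPlane (x : Fin 3 → RatFunc ℝ) (n : Fin 4 → ℝ) : Prop :=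
  ∀ t : ℝ, DomR x t → (∑ i : Fin 3, n i.castSucc * RFeval (x i) t) + n 3 = 0

/-- The normal vector of the plane `Ax + By + Cz + D = 0` is nonzero. -/
def PlaneNormalNZ (n : Fin 4 → ℝ) : Prop := ¬ (n 0 = 0 ∧ n 1 = 0 ∧ n 2 = 0)

/-- Complexification of a real vector. -/
def cmap4 (v : Fin 4 → ℝ) : Fin 4 → ℂ := fun i => (v i : ℂ)

/-- Homogeneous form of the projection onto the plane `n` from the eye point `a`:
`p ↦ ⟨n,p⟩ a − ⟨n,a⟩ p`. -/
def projHC (n a p : Fin 4 → ℂ) : Fin 4 → ℂ :=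
  (∑ i, n i * p i) • a - (∑ i, n i * a i) • p

/-- Complex homogeneous coordinates of the affine point `x(t)`. -/
def homC (x : Fin 3 → RatFunc ℝ) (t : ℂ) : Fin 4 → ℂ :=
  Fin.snoc (evalAffC x t) 1

/-- The affine form of the projection, acting on affine (complex) points. -/
def projAffC (n a : Fin 4 → ℝ) (p : Fin 3 → ℂ) : Fin 3 → ℂ :=
  fun i => projHC (cmap4 n) (cmap4 a) (Fin.snoc p 1) i.castSucc /
    projHC (cmap4 n) (cmap4 a) (Fin.snoc p 1) 3

/-- The parameter values `t`, `s` are related by the projection from the eye point `a`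
onto the plane `n`: the projection maps `x1(t)` to `x2(s)`. -/
def RelatedByProj (n a : Fin 4 → ℝ) (x1 x2 : Fin 3 → RatFunc ℝ) (t s : ℂ) : Prop :=
  DomC x1 t ∧ DomC x2 s ∧
    ∃ lam : ℂ, lam ≠ 0 ∧ projHC (cmap4 n) (cmap4 a) (homC x1 t) = lam • homC x2 s

/-- `C2` (parametrized by `x2`) is the projection of `C1` (parametrized by `x1`)
from the eye point `a` onto the plane `n`: every point of `C2` (up to finitely many)
is the projection of some point of `C1`.  The eye point is a nonzero vector of `ℝ⁴`
(projective coordinates) not lying on the plane. -/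
def IsProjectionOf (n a : Fin 4 → ℝ) (x1 x2 : Fin 3 → RatFunc ℝ) : Prop :=
  a ≠ 0 ∧ (∑ i, n i * a i) ≠ 0 ∧
    ∀ᶠ s : ℂ in cofinite, ∃ t : ℂ, RelatedByProj n a x1 x2 t s

/-- The projection, restricted to `C1`, is injective for almost all points of `C2`. -/
def NonDegenerateProj (n a : Fin 4 → ℝ) (x1 x2 : Fin 3 → RatFunc ℝ) : Prop :=
  ∀ᶠ s : ℂ in cofinite, ∃! t : ℂ, RelatedByProj n a x1 x2 t s

/-- `ψ` is associated with the projection:  `P_ã ∘ x1 = x2 ∘ ψ`. -/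
def AssociatedRF (n a : Fin 4 → ℝ) (x1 x2 : Fin 3 → RatFunc ℝ) (ψ : RatFunc ℝ) : Prop :=
  ∀ᶠ t : ℂ in cofinite, RelatedByProj n a x1 x2 t (RFevalC ψ t)

/-- `N(t,s)·(x1(t) − x2(s)) = det(x1(t) − x2(s), x1'(t), x2'(s))`,
where `N(t,s) = x1'(t) × x2'(s)`, evaluated at the complex pair `(t,s)`. -/
def NdotC (x1 x2 : Fin 3 → RatFunc ℝ) (t s : ℂ) : ℂ :=
  dotProduct
    (crossProduct (fun i => RFevalC (RFderiv (x1 i)) t) (fun i => RFevalC (RFderiv (x2 i)) s))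
    (fun i => RFevalC (x1 i) t - RFevalC (x2 i) s)

/-- Evaluation of a bivariate real polynomial at a complex point `(t,s)`. -/
def aeval2 (t s : ℂ) (F : MvPolynomial (Fin 2) ℝ) : ℂ := MvPolynomial.aeval ![t, s] F

/-- `Ncal` is (a representative of) the square-free part of the numerator of the
bivariate rational function `N(t,s)·(x1(t) − x2(s))`: it is square-free and has the
same zero set. -/
def IsNcal (x1 x2 : Fin 3 → RatFunc ℝ) (Ncal : MvPolynomial (Fin 2) ℝ) : Prop :=
  Squarefree Ncal ∧
    ∀ t s : ℂ, DomC x1 t → DomC x2 s → (aeval2 t s Ncal = 0 ↔ NdotC x1 x2 t s = 0)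

/-- The polynomial `G(t,s) = p(t) − s·q(t)` associated with `ψ = p/q`;
variable `0` is `t` and variable `1` is `s`. -/
def assocPoly (ψ : RatFunc ℝ) : MvPolynomial (Fin 2) ℝ :=
  Polynomial.aeval (MvPolynomial.X 0) ψ.num -
    MvPolynomial.X 1 * Polynomial.aeval (MvPolynomial.X 0) ψ.denom

/-- `(t,s)` is a singular point of the plane curve `𝒩* : Ncal = 0`. -/
def SingPt (Ncal : MvPolynomial (Fin 2) ℝ) (t s : ℂ) : Prop :=
  aeval2 t s Ncal = 0 ∧ aeval2 t s (MvPolynomial.pderiv 0 Ncal) = 0 ∧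
    aeval2 t s (MvPolynomial.pderiv 1 Ncal) = 0

/-- `p` is the limit point `P^∞ = lim_{t→∞} x(t)` of the parametrization `x`. -/
def IsLimitPoint (x : Fin 3 → RatFunc ℝ) (p : Fin 3 → ℂ) : Prop :=
  Filter.Tendsto (evalAffC x) (Filter.cocompact ℂ) (nhds p)

/-- `q` is a self-intersection of the curve parametrized by `x`. -/
def SelfIntersection (x : Fin 3 → RatFunc ℝ) (q : Fin 3 → ℂ) : Prop :=
  ∃ s1 s2 : ℂ, s1 ≠ s2 ∧ DomC x s1 ∧ DomC x s2 ∧ evalAffC x s1 = q ∧ evalAffC x s2 = q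

/-- The pair `(x1(t0), x2(s0))` is lucky. -/
def LuckyPair (x1 x2 : Fin 3 → RatFunc ℝ) (Ncal : MvPolynomial (Fin 2) ℝ)
    (t0 s0 : ℂ) : Prop :=
  evalAffC x1 t0 ≠ evalAffC x2 s0 ∧
  ¬ IsLimitPoint x1 (evalAffC x1 t0) ∧
  ¬ IsLimitPoint x2 (evalAffC x2 s0) ∧
  ¬ SelfIntersection x2 (evalAffC x2 s0) ∧
  ¬ ∃ s' : ℂ, SingPt Ncal t0 s'



lemma RFevalC_C (c : ℝ) (t : ℂ) : RFevalC (RatFunc.C c) t = (c : ℂ) := by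
  simp [RFevalC, RatFunc.num_C, RatFunc.denom_C]

lemma eq_C_of_numC_eq (f : RatFunc ℝ) (α : ℂ)
    (h : f.num.map (algebraMap ℝ ℂ) = C α * f.denom.map (algebraMap ℝ ℂ)) :
    ∃ c : ℝ, (α = (c : ℂ)) ∧ f = RatFunc.C c := by
  have hd : (f.denom).Monic := RatFunc.monic_denom f
  have hdm : (f.denom.map (algebraMap ℝ ℂ)).Monic := hd.map _
  set d := f.denom.natDegree with hdd
  have hdeg : (f.denom.map (algebraMap ℝ ℂ)).natDegree = d := hd.natDegree_map _
  have hcd : (f.denom.map (algebraMap ℝ ℂ)).coeff d = 1 := by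
    rw [← hdeg]; exact hdm.coeff_natDegree
  have hcoeff : (algebraMap ℝ ℂ) (f.num.coeff d) = α := by
    have := congrArg (fun p => Polynomial.coeff p d) h
    simpa [coeff_C_mul, hcd] using this
  refine ⟨f.num.coeff d, hcoeff.symm, ?_⟩
  have hmapinj : Function.Injective (Polynomial.map (algebraMap ℝ ℂ)) :=
    Polynomial.map_injective _ (algebraMap ℝ ℂ).injective
  have hnum : f.num = C (f.num.coeff d) * f.denom := by
    apply hmapinj
    rw [Polynomial.map_mul, Polynomial.map_C, hcoeff, h]
  have h0 := RatFunc.num_div_denom f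
  rw [hnum, _root_.map_mul, mul_div_assoc, div_self, mul_one] at h0
  · rw [RatFunc.algebraMap_C] at h0
    exact h0.symm
  · exact RatFunc.algebraMap_ne_zero (RatFunc.denom_ne_zero f)

lemma finite_rootsC {p : Polynomial ℝ} (hp : p ≠ 0) :
    {t : ℂ | (p.map (algebraMap ℝ ℂ)).eval t = 0}.Finite := by
  have : p.map (algebraMap ℝ ℂ) ≠ 0 :=
    (Polynomial.map_ne_zero_iff (algebraMap ℝ ℂ).injective).mpr hp
  exact Polynomial.finite_setOf_isRoot this

lemma level_finite (f : RatFunc ℝ) (hf : ∀ c : ℝ, f ≠ RatFunc.C c) (α : ℂ) :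
    {t : ℂ | RFevalC f t = α}.Finite := by
  have hden : f.denom ≠ 0 := RatFunc.denom_ne_zero f
  have hpoly : f.num.map (algebraMap ℝ ℂ) - C α * f.denom.map (algebraMap ℝ ℂ) ≠ 0 := by
    intro h
    have h' : f.num.map (algebraMap ℝ ℂ) = C α * f.denom.map (algebraMap ℝ ℂ) :=
      sub_eq_zero.mp h
    obtain ⟨c, -, hc⟩ := eq_C_of_numC_eq f α h'
    exact hf c hc
  apply Set.Finite.subset ((finite_rootsC hden).union
    (Polynomial.finite_setOf_isRoot hpoly))
  intro t ht
  simp only [Set.mem_setOf_eq] at ht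
  by_cases h0 : (f.denom.map (algebraMap ℝ ℂ)).eval t = 0
  · exact Or.inl h0
  · right
    rw [RFevalC, div_eq_iff h0] at ht
    show eval t (f.num.map (algebraMap ℝ ℂ) - C α * f.denom.map (algebraMap ℝ ℂ)) = 0
    rw [eval_sub, eval_mul, eval_C, ht]; ring

lemma preimage_finite (f : RatFunc ℝ) (hf : ∀ c : ℝ, f ≠ RatFunc.C c) {B : Set ℂ}
    (hB : B.Finite) : {t : ℂ | RFevalC f t ∈ B}.Finite := by
  have : {t : ℂ | RFevalC f t ∈ B} ⊆ ⋃ α ∈ B, {t : ℂ | RFevalC f t = α} := by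
    intro t ht; exact Set.mem_biUnion ht rfl
  exact Set.Finite.subset (hB.biUnion fun α _ => level_finite f hf α) this

lemma exists_nonconst {x : Fin 3 → RatFunc ℝ} (h : ¬ IsLineParam x) :
    ∃ i, ∀ c : ℝ, x i ≠ RatFunc.C c := by
  by_contra hcon
  push_neg at hcon
  obtain ⟨c, hc⟩ := Classical.axiomOfChoice hcon
  apply h
  refine ⟨c, ![1,0,0], ?_, ?_⟩
  · intro hv
    have := congrFun hv 0
    simp at this
  · intro t _
    refine ⟨0, ?_⟩
    funext i
    rw [evalAff, RFeval, hc i, RatFunc.num_C, RatFunc.denom_C]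
    simp

lemma evalAffC_preimage_finite {x : Fin 3 → RatFunc ℝ}
    (hx : ∃ i, ∀ c : ℝ, x i ≠ RatFunc.C c) (p : Fin 3 → ℂ) :
    {t : ℂ | evalAffC x t = p}.Finite := by
  obtain ⟨i, hi⟩ := hx
  apply Set.Finite.subset (level_finite (x i) hi (p i))
  intro t ht
  exact congrFun ht i

lemma limitpt_finite {x : Fin 3 → RatFunc ℝ}
    (hx : ∃ i, ∀ c : ℝ, x i ≠ RatFunc.C c) :
    {t : ℂ | IsLimitPoint x (evalAffC x t)}.Finite := by
  rcases Set.eq_empty_or_nonempty {t : ℂ | IsLimitPoint x (evalAffC x t)} with he | ⟨t0, ht0⟩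
  · rw [he]; exact Set.finite_empty
  · apply Set.Finite.subset (evalAffC_preimage_finite hx (evalAffC x t0))
    intro t ht
    exact tendsto_nhds_unique ht ht0

lemma domR_cofinite (x : Fin 3 → RatFunc ℝ) : {t : ℝ | ¬ DomR x t}.Finite := by
  have : {t : ℝ | ¬ DomR x t} ⊆ ⋃ i : Fin 3, {t : ℝ | (x i).denom.eval t = 0} := by
    intro t ht
    rw [Set.mem_setOf_eq, DomR] at ht
    push_neg at ht
    obtain ⟨i, hi⟩ := ht
    exact Set.mem_iUnion.mpr ⟨i, hi⟩
  exact Set.Finite.subset (Set.finite_iUnion fun i =>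
    Polynomial.finite_setOf_isRoot (RatFunc.denom_ne_zero (x i))) this


def planePoly (n : Fin 4 → ℝ) (x : Fin 3 → RatFunc ℝ) : Polynomial ℝ :=
  C (n 0) * (x 0).num * ((x 1).denom * (x 2).denom) +
  C (n 1) * (x 1).num * ((x 0).denom * (x 2).denom) +
  C (n 2) * (x 2).num * ((x 0).denom * (x 1).denom) +
  C (n 3) * ((x 0).denom * ((x 1).denom * (x 2).denom))

lemma planeR_zero_iff (n : Fin 4 → ℝ) (x : Fin 3 → RatFunc ℝ) (t : ℝ) (h : DomR x t) :
    (planePoly n x).eval t = 0 ↔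
      (∑ i : Fin 3, n i.castSucc * RFeval (x i) t) + n 3 = 0 := by
  have h0 := h 0; have h1 := h 1; have h2 := h 2
  rw [Fin.sum_univ_three]
  have hc0 : (0 : Fin 3).castSucc = (0 : Fin 4) := rfl
  have hc1 : (1 : Fin 3).castSucc = (1 : Fin 4) := rfl
  have hc2 : (2 : Fin 3).castSucc = (2 : Fin 4) := rfl
  rw [hc0, hc1, hc2]
  simp only [RFeval]
  rw [planePoly]
  simp only [eval_add, eval_mul, eval_C]
  constructor
  · intro hz
    field_simp
    linear_combination hz
  · intro hz
    field_simp at hz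
    linear_combination hz

lemma planeC_zero_iff (n : Fin 4 → ℝ) (x : Fin 3 → RatFunc ℝ) (t : ℂ) (h : DomC x t) :
    ((planePoly n x).map (algebraMap ℝ ℂ)).eval t = 0 ↔
      (∑ i : Fin 3, (n i.castSucc : ℂ) * RFevalC (x i) t) + (n 3 : ℂ) = 0 := by
  have h0 := h 0; have h1 := h 1; have h2 := h 2
  rw [Fin.sum_univ_three]
  have hc0 : (0 : Fin 3).castSucc = (0 : Fin 4) := rfl
  have hc1 : (1 : Fin 3).castSucc = (1 : Fin 4) := rfl
  have hc2 : (2 : Fin 3).castSucc = (2 : Fin 4) := rfl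
  rw [hc0, hc1, hc2]
  simp only [RFevalC]
  rw [planePoly]
  simp only [Polynomial.map_add, Polynomial.map_mul, Polynomial.map_C,
    eval_add, eval_mul, eval_C, Complex.coe_algebraMap, Polynomial.eval_map_algebraMap]
  rw [Polynomial.eval_map_algebraMap] at h0 h1 h2
  constructor
  · intro hz
    field_simp
    linear_combination hz
  · intro hz
    field_simp at hz
    linear_combination hz

lemma planePoly_eq_zero_of_inPlane {n : Fin 4 → ℝ} {x : Fin 3 → RatFunc ℝ}
    (hp : InPlane x n) : planePoly n x = 0 := by
  apply Polynomial.eq_zero_of_infinite_isRoot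
  apply Set.Infinite.mono (s := {t : ℝ | DomR x t})
  · intro t ht
    exact (planeR_zero_iff n x t ht).mpr (hp t ht)
  · have := (domR_cofinite x).infinite_compl
    simpa [Set.compl_setOf] using this

lemma inPlane_of_planePoly_eq_zero {n : Fin 4 → ℝ} {x : Fin 3 → RatFunc ℝ}
    (hz : planePoly n x = 0) : InPlane x n := by
  intro t ht
  exact (planeR_zero_iff n x t ht).mp (by rw [hz]; simp)

lemma planeC_of_inPlane {n : Fin 4 → ℝ} {x : Fin 3 → RatFunc ℝ}
    (hp : InPlane x n) (s : ℂ) (hs : DomC x s) :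
    (∑ i : Fin 3, (n i.castSucc : ℂ) * RFevalC (x i) s) + (n 3 : ℂ) = 0 := by
  apply (planeC_zero_iff n x s hs).mp
  rw [planePoly_eq_zero_of_inPlane hp]
  simp


lemma relProj_evalAff_eq {n a : Fin 4 → ℝ} {x1 x2 : Fin 3 → RatFunc ℝ} {t s s' : ℂ}
    (h : RelatedByProj n a x1 x2 t s) (h' : RelatedByProj n a x1 x2 t s') :
    evalAffC x2 s = evalAffC x2 s' := by
  obtain ⟨-, -, lam, hlam, heq⟩ := h
  obtain ⟨-, -, lam', hlam', heq'⟩ := h'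
  have h3 : ∀ s0 : ℂ, homC x2 s0 3 = 1 := by
    intro s0
    show (Fin.snoc (evalAffC x2 s0) 1 : Fin 4 → ℂ) (Fin.last 3) = 1
    rw [Fin.snoc_last]
  have hlameq : lam = lam' := by
    have e1 := congrFun heq 3
    have e2 := congrFun heq' 3
    rw [Pi.smul_apply, h3, smul_eq_mul, mul_one] at e1 e2
    rw [← e1, ← e2]
  funext i
  have e1 := congrFun heq i.castSucc
  have e2 := congrFun heq' i.castSucc
  rw [Pi.smul_apply, smul_eq_mul] at e1 e2
  have hcast : ∀ s0 : ℂ, homC x2 s0 i.castSucc = evalAffC x2 s0 i := by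
    intro s0
    show (Fin.snoc (evalAffC x2 s0) 1 : Fin 4 → ℂ) i.castSucc = _
    rw [Fin.snoc_castSucc]
  rw [hcast] at e1 e2
  apply mul_left_cancel₀ hlam
  rw [← e1, hlameq]
  exact e2

lemma psi_nonconst {n a : Fin 4 → ℝ} {x1 x2 : Fin 3 → RatFunc ℝ} {ψ : RatFunc ℝ}
    (hx2 : ProperParam x2) (hproj : IsProjectionOf n a x1 x2)
    (hψ : AssociatedRF n a x1 x2 ψ) : ∀ c : ℝ, ψ ≠ RatFunc.C c := by
  intro c hceq
  set Rel := RelatedByProj n a x1 x2 with hRel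
  have hE : {t : ℂ | ¬ Rel t ((c : ℝ) : ℂ)}.Finite := by
    have h1 : {t : ℂ | ¬ Rel t (RFevalC ψ t)}.Finite := Filter.eventually_cofinite.mp hψ
    apply h1.subset
    intro t ht
    simpa [hceq, RFevalC_C] using ht
  have hS : {s : ℂ | ¬ ∃ t, Rel t s}.Finite := Filter.eventually_cofinite.mp hproj.2.2
  set B := {s : ℂ | DomC x2 s ∧ ∃ s', s' ≠ s ∧ DomC x2 s' ∧ evalAffC x2 s' = evalAffC x2 s}
    with hB
  have hBfin : B.Finite := hx2
  set D := {s : ℂ | (∃ t, Rel t s)} \ (B ∪ {((c : ℝ) : ℂ)}) with hD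
  have hg : ∀ s : ℂ, ∃ t, s ∈ D → (t ∈ {t : ℂ | ¬ Rel t ((c : ℝ) : ℂ)} ∧ Rel t s) := by
    intro s
    by_cases hs : s ∈ D
    swap
    · exact ⟨0, fun h => absurd h hs⟩
    obtain ⟨⟨t, hts⟩, hnB⟩ := hs
    refine ⟨t, fun _ => ⟨?_, hts⟩⟩
    intro htc
    apply hnB
    left
    rw [hB, Set.mem_setOf_eq]
    refine ⟨hts.2.1, ((c : ℝ) : ℂ), ?_, htc.2.1, (relProj_evalAff_eq hts htc).symm⟩
    intro hcs
    exact hnB (Or.inr (by simp [← hcs]))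
  choose g hgp using hg
  have hinj : D.InjOn g := by
    intro s hsmem s' hs'mem hgs
    by_contra hne
    have h1 := (hgp s hsmem).2
    have h2 := (hgp s' hs'mem).2
    rw [hgs] at h1
    have heq : evalAffC x2 s = evalAffC x2 s' := relProj_evalAff_eq h1 h2
    apply hsmem.2
    left
    exact ⟨h1.2.1, s', fun h => hne h.symm, h2.2.1, heq.symm⟩
  have hDfin : D.Finite := by
    apply Set.Finite.of_finite_image _ hinj
    apply hE.subset
    rintro y ⟨s, hs, rfl⟩
    exact (hgp s hs).1
  have : (Set.univ : Set ℂ).Finite := by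
    apply Set.Finite.subset (((hDfin.union hBfin).union (Set.finite_singleton ((c:ℝ):ℂ))).union hS)
    intro s _
    by_cases h1 : ∃ t, Rel t s
    · by_cases h2 : s ∈ B ∪ {((c : ℝ) : ℂ)}
      · rcases h2 with h2 | h2
        · exact Or.inl (Or.inl (Or.inr h2))
        · exact Or.inl (Or.inr h2)
      · exact Or.inl (Or.inl (Or.inl ⟨h1, h2⟩))
    · exact Or.inr h1
  exact Set.infinite_univ this


section Bezout

variable {R : Type*} [CommRing R] [IsDomain R] [NormalizedGCDMonoid R]
  (K : Type*) [Field K] [Algebra R K] [IsFractionRing R K]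

theorem squarefree_map_fraction {P : R[X]} (hP : Squarefree P) :
    Squarefree (P.map (algebraMap R K)) := by
  have hinj : Function.Injective (algebraMap R K) := IsFractionRing.injective R K
  have hmapinj : Function.Injective (Polynomial.map (algebraMap R K)) :=
    Polynomial.map_injective _ hinj
  intro q hq
  have hPne : P ≠ 0 := hP.ne_zero
  have hPm : P.map (algebraMap R K) ≠ 0 := by
    intro h; exact hPne (hmapinj (by simpa using h))
  by_cases hq0 : q = 0
  · exfalso; rw [hq0] at hq; exact hPm (zero_dvd_iff.mp (by simpa using hq))
  obtain ⟨b, hb⟩ := IsLocalization.integerNormalization_map_to_map (nonZeroDivisors R) q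
  set Q0 := IsLocalization.integerNormalization (nonZeroDivisors R) q with hQ0
  have hbne : (algebraMap R K) (b : R) ≠ 0 :=
    fun h => nonZeroDivisors.ne_zero b.2 ((map_eq_zero_iff _ hinj).mp h)
  have hbsmul : Q0.map (algebraMap R K) = C ((algebraMap R K) (b : R)) * q := by
    rw [hb, ← IsScalarTower.algebraMap_smul K ((b : R)) q, Polynomial.smul_eq_C_mul]
  have hQ0ne : Q0 ≠ 0 := by
    intro h
    apply mul_ne_zero (C_ne_zero.mpr hbne) hq0
    rw [← hbsmul, h, Polynomial.map_zero]
  set Q1 := Q0.primPart with hQ1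
  have hQ1prim : Q1.IsPrimitive := Q0.isPrimitive_primPart
  have hcont : Q0 = C Q0.content * Q1 := Q0.eq_C_content_mul_primPart
  have hcne : (algebraMap R K) Q0.content ≠ 0 :=
    fun h => hQ0ne (content_eq_zero_iff.mp ((map_eq_zero_iff _ hinj).mp h))
  -- q is associated to Q1.map
  have hqQ1 : C ((algebraMap R K) Q0.content) * Q1.map (algebraMap R K)
      = C ((algebraMap R K) (b : R)) * q := by
    rw [← hbsmul]
    conv_rhs => rw [hcont]
    rw [Polynomial.map_mul, Polynomial.map_C]
  -- (Q1 * Q1).map divides P.primPart.map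
  have hPcont : P.map (algebraMap R K) = C ((algebraMap R K) P.content) * P.primPart.map (algebraMap R K) := by
    conv_lhs => rw [P.eq_C_content_mul_primPart]
    rw [Polynomial.map_mul, Polynomial.map_C]
  have hPcne : (algebraMap R K) P.content ≠ 0 :=
    fun h => hPne (content_eq_zero_iff.mp ((map_eq_zero_iff _ hinj).mp h))
  have hu1 : IsUnit (C ((algebraMap R K) P.content)) := isUnit_C.mpr (Ne.isUnit hPcne)
  have hu2 : IsUnit (C ((algebraMap R K) (b : R))) := isUnit_C.mpr (Ne.isUnit hbne)
  have hu3 : IsUnit (C ((algebraMap R K) Q0.content)) := isUnit_C.mpr (Ne.isUnit hcne)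
  have h5 : (C ((algebraMap R K) Q0.content) * C ((algebraMap R K) Q0.content)) *
      (Q1.map (algebraMap R K) * Q1.map (algebraMap R K)) ∣
      (C ((algebraMap R K) (b:R)) * C ((algebraMap R K) (b:R))) * P.map (algebraMap R K) := by
    have h6 := mul_dvd_mul_left (C ((algebraMap R K) (b:R)) * C ((algebraMap R K) (b:R))) hq
    calc (C ((algebraMap R K) Q0.content) * C ((algebraMap R K) Q0.content)) *
        (Q1.map (algebraMap R K) * Q1.map (algebraMap R K))
        = (C ((algebraMap R K) Q0.content) * Q1.map (algebraMap R K)) *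
          (C ((algebraMap R K) Q0.content) * Q1.map (algebraMap R K)) := by ring
      _ = (C ((algebraMap R K) (b:R)) * q) * (C ((algebraMap R K) (b:R)) * q) := by rw [hqQ1]
      _ = (C ((algebraMap R K) (b:R)) * C ((algebraMap R K) (b:R))) * (q * q) := by ring
      _ ∣ _ := h6
  have h7 : Q1.map (algebraMap R K) * Q1.map (algebraMap R K) ∣ P.map (algebraMap R K) :=
    ((hu2.mul hu2).dvd_mul_left).mp (dvd_trans (dvd_mul_left _ _) h5)
  have hdvd : (Q1 * Q1).map (algebraMap R K) ∣ P.primPart.map (algebraMap R K) := by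
    rw [Polynomial.map_mul, ← hu1.dvd_mul_left, ← hPcont]
    exact h7
  have : Q1 * Q1 ∣ P.primPart := by
    rw [(hQ1prim.mul hQ1prim).dvd_iff_fraction_map_dvd_fraction_map K]
    exact hdvd
  have hQ1unit : IsUnit Q1 := hP Q1 (this.trans P.primPart_dvd)
  have : IsUnit (C ((algebraMap R K) Q0.content) * Q1.map (algebraMap R K)) :=
    hu3.mul (hQ1unit.map (Polynomial.mapRingHom (algebraMap R K)))
  rw [hqQ1] at this
  exact (isUnit_of_mul_isUnit_right this)

theorem exists_bezout [CharZero K] {P : R[X]} (hP : Squarefree P) :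
    ∃ U V : R[X], ∃ d : R, d ≠ 0 ∧ U * P + V * derivative P = C d := by
  have hinj : Function.Injective (algebraMap R K) := IsFractionRing.injective R K
  have hmapinj : Function.Injective (Polynomial.map (algebraMap R K)) :=
    Polynomial.map_injective _ hinj
  have hsq := squarefree_map_fraction K hP
  have hsep : (P.map (algebraMap R K)).Separable :=
    (PerfectField.separable_iff_squarefree).mpr hsq
  obtain ⟨u, v, huv⟩ := hsep
  obtain ⟨bu, hbu⟩ := IsLocalization.integerNormalization_map_to_map (nonZeroDivisors R) u
  obtain ⟨bv, hbv⟩ := IsLocalization.integerNormalization_map_to_map (nonZeroDivisors R) v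
  have hbu' : (IsLocalization.integerNormalization (nonZeroDivisors R) u).map (algebraMap R K)
      = C ((algebraMap R K) (bu : R)) * u := by
    rw [hbu, ← IsScalarTower.algebraMap_smul K ((bu : R)) u, Polynomial.smul_eq_C_mul]
  have hbv' : (IsLocalization.integerNormalization (nonZeroDivisors R) v).map (algebraMap R K)
      = C ((algebraMap R K) (bv : R)) * v := by
    rw [hbv, ← IsScalarTower.algebraMap_smul K ((bv : R)) v, Polynomial.smul_eq_C_mul]
  refine ⟨IsLocalization.integerNormalization (nonZeroDivisors R) u * C (bv : R),
    IsLocalization.integerNormalization (nonZeroDivisors R) v * C (bu : R),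
    (bu : R) * (bv : R),
    mul_ne_zero (nonZeroDivisors.ne_zero bu.2) (nonZeroDivisors.ne_zero bv.2), ?_⟩
  apply hmapinj
  simp only [Polynomial.map_add, Polynomial.map_mul, Polynomial.map_C, hbu', hbv',
    Polynomial.derivative_map, _root_.map_mul]
  rw [← Polynomial.derivative_map]
  linear_combination (C ((algebraMap R K) (bu : R)) * C ((algebraMap R K) (bv : R))) * huv


end Bezout

def eqv2 : MvPolynomial (Fin 2) ℝ ≃ₐ[ℝ] Polynomial (MvPolynomial (Fin 1) ℝ) :=
  (MvPolynomial.renameEquiv ℝ (Equiv.swap 0 1)).trans (MvPolynomial.finSuccEquiv ℝ 1)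

lemma finSuccEquiv_pderiv_zero (G : MvPolynomial (Fin 2) ℝ) :
    MvPolynomial.finSuccEquiv ℝ 1 (MvPolynomial.pderiv 0 G) =
      Polynomial.derivative (MvPolynomial.finSuccEquiv ℝ 1 G) := by
  induction G using MvPolynomial.induction_on with
  | C r => simp [MvPolynomial.finSuccEquiv_apply]
  | add p q ihp ihq => simp [ihp, ihq]
  | mul_X p i ih =>
    rw [MvPolynomial.pderiv_mul, map_add, _root_.map_mul, _root_.map_mul, _root_.map_mul, ih,
      Polynomial.derivative_mul]
    congr 1
    refine congrArg ((MvPolynomial.finSuccEquiv ℝ 1) p * ·) ?_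
    refine Fin.cases ?_ (fun j => ?_) i
    · rw [MvPolynomial.pderiv_X_self, MvPolynomial.finSuccEquiv_X_zero]
      simp
    · rw [MvPolynomial.finSuccEquiv_X_succ]
      rw [MvPolynomial.pderiv_X, Pi.single_eq_of_ne (Fin.succ_ne_zero j)]
      simp

lemma eqv2_pderiv_one (F : MvPolynomial (Fin 2) ℝ) :
    eqv2 (MvPolynomial.pderiv 1 F) = Polynomial.derivative (eqv2 F) := by
  show MvPolynomial.finSuccEquiv ℝ 1 (MvPolynomial.rename (Equiv.swap (0:Fin 2) 1) _) = _
  rw [show (MvPolynomial.rename (Equiv.swap (0:Fin 2) 1)) (MvPolynomial.pderiv 1 F)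
      = MvPolynomial.pderiv ((Equiv.swap (0:Fin 2) 1) 1) (MvPolynomial.rename (Equiv.swap (0:Fin 2) 1) F) from
      (MvPolynomial.pderiv_rename (Equiv.injective _) 1 F).symm]
  rw [show (Equiv.swap (0:Fin 2) 1) 1 = 0 from Equiv.swap_apply_right 0 1]
  exact finSuccEquiv_pderiv_zero _

lemma eqv2_X0 : eqv2 (MvPolynomial.X (0 : Fin 2)) = Polynomial.C (MvPolynomial.X 0) := by
  rw [eqv2, AlgEquiv.trans_apply, MvPolynomial.renameEquiv_apply, MvPolynomial.rename_X,
    Equiv.swap_apply_left, show (1 : Fin 2) = (0 : Fin 1).succ from rfl,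
    MvPolynomial.finSuccEquiv_X_succ]

lemma eqv2_X1 : eqv2 (MvPolynomial.X (1 : Fin 2)) = Polynomial.X := by
  rw [eqv2, AlgEquiv.trans_apply, MvPolynomial.renameEquiv_apply, MvPolynomial.rename_X,
    Equiv.swap_apply_right, MvPolynomial.finSuccEquiv_X_zero]

lemma eqv2_C (r : ℝ) : eqv2 (MvPolynomial.C r) = Polynomial.C (MvPolynomial.C r) := by
  rw [eqv2, AlgEquiv.trans_apply, MvPolynomial.renameEquiv_apply, MvPolynomial.rename_C]
  simp [MvPolynomial.finSuccEquiv_apply]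

lemma aeval2_eqv2 (t s : ℂ) (F : MvPolynomial (Fin 2) ℝ) :
    aeval2 t s F = Polynomial.eval₂
      ((MvPolynomial.aeval (fun _ : Fin 1 => t)).toRingHom : MvPolynomial (Fin 1) ℝ →+* ℂ)
      s (eqv2 F) := by
  have hΦ : ((Polynomial.eval₂RingHom
        ((MvPolynomial.aeval (fun _ : Fin 1 => t)).toRingHom) s).comp
        (eqv2.toAlgHom.toRingHom) : MvPolynomial (Fin 2) ℝ →+* ℂ)
      = (MvPolynomial.aeval ![t, s]).toRingHom := by
    apply MvPolynomial.ringHom_ext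
    · intro r
      simp [eqv2_C]
    · intro i
      fin_cases i
      · simp [eqv2_X0]
      · simp [eqv2_X1]
  exact (RingHom.congr_fun hΦ F).symm

lemma eqv2_squarefree {F : MvPolynomial (Fin 2) ℝ} (h : Squarefree F) : Squarefree (eqv2 F) := by
  intro q hq
  have h2 : eqv2.symm q * eqv2.symm q ∣ F := by
    have := map_dvd eqv2.symm (dvd_refl (q * q)) |>.trans (map_dvd eqv2.symm hq)
    simpa [_root_.map_mul] using map_dvd eqv2.symm hq
  have h3 := h _ h2
  have h4 := h3.map (eqv2 : MvPolynomial (Fin 2) ℝ →* Polynomial (MvPolynomial (Fin 1) ℝ))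
  simpa using h4

lemma aevalA_finite {d : MvPolynomial (Fin 1) ℝ} (hd : d ≠ 0) :
    {t : ℂ | MvPolynomial.aeval (fun _ : Fin 1 => t) d = 0}.Finite := by
  set σ : MvPolynomial (Fin 1) ℝ →ₐ[ℝ] Polynomial ℝ :=
    MvPolynomial.aeval (fun _ : Fin 1 => Polynomial.X) with hσ
  have hinv : ∀ p : MvPolynomial (Fin 1) ℝ, Polynomial.aeval (MvPolynomial.X 0) (σ p) = p := by
    intro p
    have : ((Polynomial.aeval (MvPolynomial.X (0 : Fin 1))).comp σ :
        MvPolynomial (Fin 1) ℝ →ₐ[ℝ] MvPolynomial (Fin 1) ℝ)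
        = AlgHom.id ℝ _ := by
      apply MvPolynomial.algHom_ext
      intro i
      have : i = 0 := Subsingleton.elim i 0
      subst this
      simp [hσ]
    exact congrArg (fun f => f p) (congrArg DFunLike.coe this)
  have hσd : σ d ≠ 0 := fun h => hd (by rw [← hinv d, h, map_zero])
  have hval : ∀ t : ℂ, MvPolynomial.aeval (fun _ : Fin 1 => t) d = Polynomial.aeval t (σ d) := by
    intro t
    have : ((Polynomial.aeval t).comp σ : MvPolynomial (Fin 1) ℝ →ₐ[ℝ] ℂ)
        = MvPolynomial.aeval (fun _ : Fin 1 => t) := by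
      apply MvPolynomial.algHom_ext
      intro i
      simp [hσ]
    exact (congrArg (fun f => f d) (congrArg DFunLike.coe this)).symm
  have : {t : ℂ | MvPolynomial.aeval (fun _ : Fin 1 => t) d = 0}
      = {t : ℂ | ((σ d).map (algebraMap ℝ ℂ)).eval t = 0} := by
    ext t
    rw [Set.mem_setOf_eq, Set.mem_setOf_eq, hval, Polynomial.aeval_def,
      Polynomial.eval₂_eq_eval_map]
  rw [this]
  have : (σ d).map (algebraMap ℝ ℂ) ≠ 0 :=
    (Polynomial.map_ne_zero_iff (algebraMap ℝ ℂ).injective).mpr hσd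
  exact Polynomial.finite_setOf_isRoot this

lemma sing_finite {Ncal : MvPolynomial (Fin 2) ℝ} (hsq : Squarefree Ncal) :
    {t0 : ℂ | ∃ s, SingPt Ncal t0 s}.Finite := by
  letI : NormalizationMonoid (MvPolynomial (Fin 1) ℝ) :=
    UniqueFactorizationMonoid.normalizationMonoid.toNormalizationMonoid
  letI : NormalizedGCDMonoid (MvPolynomial (Fin 1) ℝ) :=
    UniqueFactorizationMonoid.toNormalizedGCDMonoid _
  have hPsq : Squarefree (eqv2 Ncal) := eqv2_squarefree hsq
  obtain ⟨U, V, d, hd, hbez⟩ := exists_bezout (FractionRing (MvPolynomial (Fin 1) ℝ)) hPsq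
  apply Set.Finite.subset (aevalA_finite hd)
  rintro t0 ⟨s, hs1, -, hs3⟩
  rw [Set.mem_setOf_eq]
  have hev := congrArg (Polynomial.eval₂
    ((MvPolynomial.aeval (fun _ : Fin 1 => t0)).toRingHom : MvPolynomial (Fin 1) ℝ →+* ℂ) s) hbez
  rw [Polynomial.eval₂_add, Polynomial.eval₂_mul, Polynomial.eval₂_mul, Polynomial.eval₂_C] at hev
  rw [← aeval2_eqv2, ← eqv2_pderiv_one, ← aeval2_eqv2] at hev
  rw [hs1, hs3, mul_zero, mul_zero, add_zero] at hev
  exact hev.symm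


/-- Let `ψ` be a rational function associated with a projection
`P_ã` mapping `C1` onto `C2`.  Then the set `𝒢_ψ` of parameter values `t0` such that
the pair `(x1(t0), x2(ψ(t0)))` is unlucky (in particular all `t0` where the pair is
not even well defined) is finite. -/
theorem statement_14 (x1 x2 : Fin 3 → RatFunc ℝ) (n a : Fin 4 → ℝ) (ψ : RatFunc ℝ)
    (Ncal : MvPolynomial (Fin 2) ℝ)
    (hx1 : ProperParam x1) (hx2 : ProperParam x2)
    (hnl1 : ¬ IsLineParam x1) (hnl2 : ¬ IsLineParam x2)
    (hn : PlaneNormalNZ n) (hplane : InPlane x2 n)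
    (hsame : ¬ ∃ m : Fin 4 → ℝ, PlaneNormalNZ m ∧ InPlane x1 m ∧ InPlane x2 m)
    (hN : IsNcal x1 x2 Ncal)
    (hproj : IsProjectionOf n a x1 x2)
    (hψ : AssociatedRF n a x1 x2 ψ) :
    {t0 : ℂ | ¬ (DomC x1 t0 ∧ ((ψ.denom.map (algebraMap ℝ ℂ)).eval t0 ≠ 0) ∧
        DomC x2 (RFevalC ψ t0) ∧
        LuckyPair x1 x2 Ncal t0 (RFevalC ψ t0))}.Finite := by
  classical
  have hψnc : ∀ c : ℝ, ψ ≠ RatFunc.C c := psi_nonconst hx2 hproj hψ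
  have hx1nc : ∃ i, ∀ c : ℝ, x1 i ≠ RatFunc.C c := exists_nonconst hnl1
  have hx2nc : ∃ i, ∀ c : ℝ, x2 i ≠ RatFunc.C c := exists_nonconst hnl2
  have hP1 : planePoly n x1 ≠ 0 := fun h =>
    hsame ⟨n, hn, inPlane_of_planePoly_eq_zero h, hplane⟩
  have hS1 : (⋃ i : Fin 3, {t : ℂ | ((x1 i).denom.map (algebraMap ℝ ℂ)).eval t = 0}).Finite :=
    Set.finite_iUnion fun i => finite_rootsC (RatFunc.denom_ne_zero (x1 i))
  have hS2 : {t : ℂ | (ψ.denom.map (algebraMap ℝ ℂ)).eval t = 0}.Finite :=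
    finite_rootsC (RatFunc.denom_ne_zero ψ)
  have hZ3 : (⋃ i : Fin 3, {s : ℂ | ((x2 i).denom.map (algebraMap ℝ ℂ)).eval s = 0}).Finite :=
    Set.finite_iUnion fun i => finite_rootsC (RatFunc.denom_ne_zero (x2 i))
  have hS3 : {t : ℂ | RFevalC ψ t ∈
      (⋃ i : Fin 3, {s : ℂ | ((x2 i).denom.map (algebraMap ℝ ℂ)).eval s = 0})}.Finite :=
    preimage_finite ψ hψnc hZ3
  have hS4 : {t : ℂ | ((planePoly n x1).map (algebraMap ℝ ℂ)).eval t = 0}.Finite :=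
    finite_rootsC hP1
  have hS5 : {t : ℂ | IsLimitPoint x1 (evalAffC x1 t)}.Finite := limitpt_finite hx1nc
  have hZ6 : {s : ℂ | IsLimitPoint x2 (evalAffC x2 s)}.Finite := limitpt_finite hx2nc
  have hS6 : {t : ℂ | RFevalC ψ t ∈ {s : ℂ | IsLimitPoint x2 (evalAffC x2 s)}}.Finite :=
    preimage_finite ψ hψnc hZ6
  have hB2 : {s : ℂ | DomC x2 s ∧ ∃ s', s' ≠ s ∧ DomC x2 s' ∧
      evalAffC x2 s' = evalAffC x2 s}.Finite := hx2
  have hS7 : {t : ℂ | RFevalC ψ t ∈ {s : ℂ | DomC x2 s ∧ ∃ s', s' ≠ s ∧ DomC x2 s' ∧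
      evalAffC x2 s' = evalAffC x2 s}}.Finite := preimage_finite ψ hψnc hB2
  have hS8 : {t0 : ℂ | ∃ s, SingPt Ncal t0 s}.Finite := sing_finite hN.1
  apply Set.Finite.subset
    (((((((hS1.union hS2).union hS3).union hS4).union hS5).union hS6).union hS7).union hS8)
  intro t0 ht0
  rw [Set.mem_setOf_eq] at ht0
  by_cases hA : DomC x1 t0
  swap
  · rw [DomC] at hA
    push_neg at hA
    obtain ⟨i, hi⟩ := hA
    refine Or.inl (Or.inl (Or.inl (Or.inl (Or.inl (Or.inl (Or.inl ?_))))))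
    exact Set.mem_iUnion.mpr ⟨i, hi⟩
  by_cases hB : (ψ.denom.map (algebraMap ℝ ℂ)).eval t0 = 0
  · exact Or.inl (Or.inl (Or.inl (Or.inl (Or.inl (Or.inl (Or.inr hB))))))
  by_cases hC : DomC x2 (RFevalC ψ t0)
  swap
  · rw [DomC] at hC
    push_neg at hC
    obtain ⟨i, hi⟩ := hC
    refine Or.inl (Or.inl (Or.inl (Or.inl (Or.inl (Or.inr ?_)))))
    exact Set.mem_setOf_eq ▸ Set.mem_iUnion.mpr ⟨i, hi⟩
  by_cases h1 : evalAffC x1 t0 = evalAffC x2 (RFevalC ψ t0)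
  · refine Or.inl (Or.inl (Or.inl (Or.inl (Or.inr ?_))))
    rw [Set.mem_setOf_eq]
    apply (planeC_zero_iff n x1 t0 hA).mpr
    have hsum : (∑ i : Fin 3, ((n i.castSucc : ℝ) : ℂ) * RFevalC (x1 i) t0)
        = ∑ i : Fin 3, ((n i.castSucc : ℝ) : ℂ) * RFevalC (x2 i) (RFevalC ψ t0) :=
      Finset.sum_congr rfl fun i _ => by rw [show RFevalC (x1 i) t0
        = RFevalC (x2 i) (RFevalC ψ t0) from congrFun h1 i]
    rw [hsum]
    exact planeC_of_inPlane hplane (RFevalC ψ t0) hC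
  by_cases h2 : IsLimitPoint x1 (evalAffC x1 t0)
  · exact Or.inl (Or.inl (Or.inl (Or.inr h2)))
  by_cases h3 : IsLimitPoint x2 (evalAffC x2 (RFevalC ψ t0))
  · exact Or.inl (Or.inl (Or.inr h3))
  by_cases h4 : SelfIntersection x2 (evalAffC x2 (RFevalC ψ t0))
  · refine Or.inl (Or.inr ?_)
    rw [Set.mem_setOf_eq, Set.mem_setOf_eq]
    obtain ⟨s1, s2, hne, hd1, hd2, he1, he2⟩ := h4
    refine ⟨hC, ?_⟩
    by_cases hs1 : s1 = RFevalC ψ t0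
    · refine ⟨s2, ?_, hd2, he2⟩
      intro h
      exact hne (hs1.trans h.symm)
    · exact ⟨s1, hs1, hd1, he1⟩
  by_cases h5 : ∃ s', SingPt Ncal t0 s'
  · exact Or.inr h5
  exact absurd ⟨hA, hB, hC, h1, h2, h3, h4, h5⟩ ht0

end
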